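/- Assume T is power compact. Then for every real λ > 0, every family of pairwise non-a.e.-equal T-atoms A with ρ(A) ≥ λ is finite. -/

import Mathlib

open MeasureTheory ENNReal Filter Set

noncomputable section

namespace PaperAtoms

variable {Ω : Type*} [MeasurableSpace Ω] {μ : MeasureTheory.Measure Ω} {p : ℝ≥0∞} [Fact (1 ≤ p)]

/-- `T` is a positive operator on `Lp`. -/
def IsPositiveOp (T : Lp ℝ p μ →L[ℝ] Lp ℝ p μ) : Prop :=
  ∀ f : Lp ℝ p μ, 0 ≤ f → 0 ≤ T f

/-- A measurable set `A` is `T`-invariant if `T f` vanishes a.e. on `Aᶜ` for every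
nonnegative `f ∈ Lp` vanishing a.e. on `Aᶜ`. -/
def Invariant (T : Lp ℝ p μ →L[ℝ] Lp ℝ p μ) (A : Set Ω) : Prop :=
  MeasurableSet A ∧
    ∀ f : Lp ℝ p μ, 0 ≤ f → (∀ᵐ x ∂μ, x ∉ A → f x = 0) → ∀ᵐ x ∂μ, x ∉ A → T f x = 0

/-- `A` is `T`-co-invariant if `Aᶜ` is `T`-invariant. -/
def CoInvariant (T : Lp ℝ p μ →L[ℝ] Lp ℝ p μ) (A : Set Ω) : Prop :=
  Invariant T Aᶜ

/-- `A` is `T`-admissible if it belongs to the σ-field generated by the `T`-invariant sets. -/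
def Admissible (T : Lp ℝ p μ →L[ℝ] Lp ℝ p μ) (A : Set Ω) : Prop :=
  MeasurableSet[MeasurableSpace.generateFrom {B : Set Ω | Invariant T B}] A

/-- A `T`-atom is a minimal `T`-admissible set with positive measure. -/
def Atom (T : Lp ℝ p μ →L[ℝ] Lp ℝ p μ) (A : Set Ω) : Prop :=
  Admissible T A ∧ 0 < μ A ∧
    ∀ B : Set Ω, Admissible T B → B ≤ᵐ[μ] A → μ B = 0 ∨ B =ᵐ[μ] A

/-- `FA` is (a version of) the future of `A`: the minimal `T`-invariant set containing `A` a.e. -/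
def IsFuture (T : Lp ℝ p μ →L[ℝ] Lp ℝ p μ) (A FA : Set Ω) : Prop :=
  Invariant T FA ∧ A ≤ᵐ[μ] FA ∧
    ∀ B : Set Ω, Invariant T B → A ≤ᵐ[μ] B → FA ≤ᵐ[μ] B

/-- `PA` is (a version of) the past of `A`: the minimal `T`-co-invariant set containing `A` a.e. -/
def IsPast (T : Lp ℝ p μ →L[ℝ] Lp ℝ p μ) (A PA : Set Ω) : Prop :=
  CoInvariant T PA ∧ A ≤ᵐ[μ] PA ∧
    ∀ B : Set Ω, CoInvariant T B → A ≤ᵐ[μ] B → PA ≤ᵐ[μ] B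

/-- `A` is `T`-convex if `A = F(A) ∩ P(A)` a.e. -/
def Convexe (T : Lp ℝ p μ →L[ℝ] Lp ℝ p μ) (A : Set Ω) : Prop :=
  MeasurableSet A ∧
    ∃ FA PA : Set Ω, IsFuture T A FA ∧ IsPast T A PA ∧ A =ᵐ[μ] (FA ∩ PA : Set Ω)

/-- Multiplication by the indicator function of `A`, as a bounded operator on `Lp`
(defined as `0` if `A` is not measurable). -/
def indicatorCLM (μ : MeasureTheory.Measure Ω) (p : ℝ≥0∞) [Fact (1 ≤ p)] (A : Set Ω) :
    Lp ℝ p μ →L[ℝ] Lp ℝ p μ := by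
  classical
  exact if hA : MeasurableSet A then
    LinearMap.mkContinuous
      { toFun := fun f => ((Lp.memLp f).indicator hA).toLp (A.indicator f)
        map_add' := fun f g => by
          rw [← MemLp.toLp_add]
          refine MemLp.toLp_congr _ _ ?_
          filter_upwards [Lp.coeFn_add f g] with x hx
          simp only [Pi.add_apply, Set.indicator_apply, hx]
          split <;> simp
        map_smul' := fun c f => by
          rw [RingHom.id_apply, ← MemLp.toLp_const_smul]
          refine MemLp.toLp_congr _ _ ?_
          filter_upwards [Lp.coeFn_smul c f] with x hx
          simp only [Pi.smul_apply, Set.indicator_apply, hx, smul_eq_mul]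
          split <;> simp }
      1
      (fun f => by
        simp only [LinearMap.coe_mk, AddHom.coe_mk, one_mul]
        rw [Lp.norm_toLp, Lp.norm_def]
        exact ENNReal.toReal_mono (Lp.eLpNorm_ne_top f) (eLpNorm_indicator_le _))
  else 0

/-- The restriction `T_A = 1_A T 1_A` of `T` to a measurable set `A`. -/
def restrictOp (T : Lp ℝ p μ →L[ℝ] Lp ℝ p μ) (A : Set Ω) : Lp ℝ p μ →L[ℝ] Lp ℝ p μ :=
  (indicatorCLM μ p A).comp (T.comp (indicatorCLM μ p A))

/-- The spectral radius of a bounded operator, via Gelfand's formula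
`ρ(T) = inf_n ‖Tⁿ‖^(1/n) = lim_n ‖Tⁿ‖^(1/n)`. -/
def specRadius (T : Lp ℝ p μ →L[ℝ] Lp ℝ p μ) : ℝ :=
  ⨅ n : ℕ, ‖T ^ (n + 1)‖ ^ (((n : ℝ) + 1)⁻¹)

/-- The spectral radius `ρ(A)` of the restriction of `T` to `A`. -/
def rhoSet (T : Lp ℝ p μ →L[ℝ] Lp ℝ p μ) (A : Set Ω) : ℝ :=
  specRadius (restrictOp T A)

/-- A measurable set `A` with `μ A > 0` is `T`-irreducible if the restriction of `T` to `A`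
is irreducible, i.e. every `T_A`-invariant subset of `A` is a.e. trivial. -/
def Irreducible (T : Lp ℝ p μ →L[ℝ] Lp ℝ p μ) (A : Set Ω) : Prop :=
  MeasurableSet A ∧ 0 < μ A ∧
    ∀ B : Set Ω, Invariant (restrictOp T A) B → B ≤ᵐ[μ] A → μ B = 0 ∨ B =ᵐ[μ] A

/-- `T` is power compact if some power `T^k`, `k ≥ 1`, is a compact operator. -/
def PowerCompact (T : Lp ℝ p μ →L[ℝ] Lp ℝ p μ) : Prop :=
  ∃ k : ℕ, 1 ≤ k ∧ IsCompactOperator (⇑(T ^ k))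

/-- `B ≼ A` for atoms: `B ⊆ F(A)` a.e. -/
def Prec (T : Lp ℝ p μ →L[ℝ] Lp ℝ p μ) (B A : Set Ω) : Prop :=
  ∃ FA : Set Ω, IsFuture T A FA ∧ B ≤ᵐ[μ] FA

/-- `B ≺ A` for atoms: `B ⊆ F(A)` a.e. and `B ≠ A` a.e. -/
def PrecStrict (T : Lp ℝ p μ →L[ℝ] Lp ℝ p μ) (B A : Set Ω) : Prop :=
  Prec T B A ∧ ¬ (B =ᵐ[μ] A)

/-- A critical atom: a `T`-atom whose spectral radius equals that of `T`. -/
def CriticalAtom (T : Lp ℝ p μ →L[ℝ] Lp ℝ p μ) (A : Set Ω) : Prop :=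
  Atom T A ∧ rhoSet T A = specRadius T

/-- There is a chain `A = A_0 ≻ A_1 ≻ ⋯ ≻ A_n` of critical atoms starting at `A`. -/
def ChainFrom (T : Lp ℝ p μ →L[ℝ] Lp ℝ p μ) (A : Set Ω) (n : ℕ) : Prop :=
  ∃ c : ℕ → Set Ω, c 0 = A ∧ (∀ i ≤ n, CriticalAtom T (c i)) ∧
    ∀ i < n, PrecStrict T (c (i + 1)) (c i)

/-- The generalized eigenspace `⋃ₖ ker (T - λ id)^k` of `T` at `λ`. -/
def genEigenspace (T : Lp ℝ p μ →L[ℝ] Lp ℝ p μ) (l : ℝ) : Submodule ℝ (Lp ℝ p μ) :=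
  ⨆ k : ℕ, LinearMap.ker (((T - l • (1 : Lp ℝ p μ →L[ℝ] Lp ℝ p μ)) ^ k : Lp ℝ p μ →L[ℝ] Lp ℝ p μ) :
    Lp ℝ p μ →ₗ[ℝ] Lp ℝ p μ)

/-- The algebraic multiplicity of `λ` for `T`. -/
def algMult (T : Lp ℝ p μ →L[ℝ] Lp ℝ p μ) (l : ℝ) : ℕ :=
  Module.finrank ℝ ↥(genEigenspace T l)

/-- The set of `k` at which the kernels of `(T - ρ(T) id)^k` stabilize; the ascent of `T`
at `ρ(T)` is its infimum. -/
def ascentSet (T : Lp ℝ p μ →L[ℝ] Lp ℝ p μ) : Set ℕ :=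
  {k : ℕ | LinearMap.ker (((T - specRadius T • (1 : Lp ℝ p μ →L[ℝ] Lp ℝ p μ)) ^ k :
        Lp ℝ p μ →L[ℝ] Lp ℝ p μ) : Lp ℝ p μ →ₗ[ℝ] Lp ℝ p μ)
      = LinearMap.ker (((T - specRadius T • (1 : Lp ℝ p μ →L[ℝ] Lp ℝ p μ)) ^ (k + 1) :
        Lp ℝ p μ →L[ℝ] Lp ℝ p μ) : Lp ℝ p μ →ₗ[ℝ] Lp ℝ p μ)}

/-- `D` is (a version of) the set `T(C)`, i.e. the support of `T(1_C f)` for any a.e.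
positive `f ∈ Lp`. -/
def IsImage (T : Lp ℝ p μ →L[ℝ] Lp ℝ p μ) (C D : Set Ω) : Prop :=
  MeasurableSet C ∧ MeasurableSet D ∧
    ∀ f : Lp ℝ p μ, (∀ᵐ x ∂μ, 0 < f x) →
      D =ᵐ[μ] ({x | T (indicatorCLM μ p C f) x ≠ 0} : Set Ω)

/-- `D` is (a version of) the `k`-fold iterated image `T^k(C)`. -/
def IsIterImage (T : Lp ℝ p μ →L[ℝ] Lp ℝ p μ) : ℕ → Set Ω → Set Ω → Prop
  | 0, C, D => D = C
  | (k + 1), C, D => ∃ E : Set Ω, IsIterImage T k C E ∧ IsImage T E D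

section AuxProof

open Topology

lemma indicatorCLM_coeFn {A : Set Ω} (hA : MeasurableSet A) (f : Lp ℝ p μ) :
    ⇑(indicatorCLM μ p A f) =ᵐ[μ] A.indicator ⇑f := by
  classical
  rw [indicatorCLM, dif_pos hA, LinearMap.mkContinuous_apply]
  simp only [LinearMap.coe_mk, AddHom.coe_mk]
  exact MemLp.coeFn_toLp _

lemma indicatorCLM_nonneg {A : Set Ω} (hA : MeasurableSet A) {f : Lp ℝ p μ} (hf : 0 ≤ f) :
    0 ≤ indicatorCLM μ p A f := by
  rw [← Lp.coeFn_nonneg] at hf ⊢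
  filter_upwards [indicatorCLM_coeFn hA f, hf] with x hx hx0
  rw [hx]
  exact Set.indicator_apply_nonneg fun _ => hx0

lemma indicatorCLM_le_self {A : Set Ω} (hA : MeasurableSet A) {f : Lp ℝ p μ} (hf : 0 ≤ f) :
    indicatorCLM μ p A f ≤ f := by
  rw [← Lp.coeFn_nonneg] at hf
  rw [← Lp.coeFn_le]
  filter_upwards [indicatorCLM_coeFn hA f, hf] with x hx hx0
  rw [hx]
  exact Set.indicator_apply_le' (fun _ => le_rfl) (fun _ => hx0)

lemma indicatorCLM_idem {A : Set Ω} (hA : MeasurableSet A) (f : Lp ℝ p μ) :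
    indicatorCLM μ p A (indicatorCLM μ p A f) = indicatorCLM μ p A f := by
  apply Lp.ext
  filter_upwards [indicatorCLM_coeFn hA (indicatorCLM μ p A f), indicatorCLM_coeFn hA f]
    with x hx hx'
  rw [hx]
  by_cases hxA : x ∈ A
  · rw [Set.indicator_of_mem hxA]
  · rw [Set.indicator_of_notMem hxA, hx', Set.indicator_of_notMem hxA]

lemma indicatorCLM_norm_le {A : Set Ω} (hA : MeasurableSet A) (f : Lp ℝ p μ) :
    ‖indicatorCLM μ p A f‖ ≤ ‖f‖ := by
  refine norm_le_norm_of_abs_le_abs ?_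
  rw [← Lp.coeFn_le]
  filter_upwards [Lp.coeFn_abs (indicatorCLM μ p A f), Lp.coeFn_abs f,
    indicatorCLM_coeFn hA f] with x h1 h2 h3
  rw [h1, h2, h3]
  by_cases hxA : x ∈ A
  · rw [Set.indicator_of_mem hxA]
  · rw [Set.indicator_of_notMem hxA]
    simp [abs_nonneg]

lemma norm_le_of_nonneg_of_le {f g : Lp ℝ p μ} (hf : 0 ≤ f) (h : f ≤ g) : ‖f‖ ≤ ‖g‖ :=
  norm_le_norm_of_abs_le_abs
    (by rw [abs_of_nonneg hf, abs_of_nonneg (hf.trans h)]; exact h)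

lemma IsPositiveOp.mono {T : Lp ℝ p μ →L[ℝ] Lp ℝ p μ} (hT : IsPositiveOp T)
    {f g : Lp ℝ p μ} (h : f ≤ g) : T f ≤ T g := by
  have h2 := hT (g - f) (by rwa [sub_nonneg])
  rw [map_sub] at h2
  exact sub_nonneg.mp h2

lemma IsPositiveOp.pow {T : Lp ℝ p μ →L[ℝ] Lp ℝ p μ} (hT : IsPositiveOp T) (k : ℕ) :
    IsPositiveOp (T ^ k) := by
  induction k with
  | zero => intro f hf; simpa [pow_zero, ContinuousLinearMap.one_apply] using hf
  | succ n ih =>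
    intro f hf
    rw [pow_succ, ContinuousLinearMap.mul_apply]
    exact ih _ (hT f hf)

lemma IsPositiveOp.abs_apply_le {T : Lp ℝ p μ →L[ℝ] Lp ℝ p μ} (hT : IsPositiveOp T)
    (f : Lp ℝ p μ) : |T f| ≤ T |f| := by
  have h1 : T f ≤ T |f| := hT.mono (le_abs_self f)
  have h2 : -(T f) ≤ T |f| := by
    have := hT.mono (neg_le_abs f)
    rwa [map_neg] at this
  exact sup_le h1 h2

lemma restrictOp_apply' (T : Lp ℝ p μ →L[ℝ] Lp ℝ p μ) (A : Set Ω) (f : Lp ℝ p μ) :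
    restrictOp T A f = indicatorCLM μ p A (T (indicatorCLM μ p A f)) := rfl

lemma restrictOp_pos {T : Lp ℝ p μ →L[ℝ] Lp ℝ p μ} (hT : IsPositiveOp T) {A : Set Ω}
    (hA : MeasurableSet A) : IsPositiveOp (restrictOp T A) := fun f hf =>
  indicatorCLM_nonneg hA (hT _ (indicatorCLM_nonneg hA hf))

lemma restrictOp_indicator_apply (T : Lp ℝ p μ →L[ℝ] Lp ℝ p μ) {A : Set Ω}
    (hA : MeasurableSet A) (f : Lp ℝ p μ) :
    restrictOp T A (indicatorCLM μ p A f) = restrictOp T A f := by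
  rw [restrictOp_apply', restrictOp_apply', indicatorCLM_idem hA]

lemma restrictOp_pow_indicator_apply (T : Lp ℝ p μ →L[ℝ] Lp ℝ p μ) {A : Set Ω}
    (hA : MeasurableSet A) (m : ℕ) (f : Lp ℝ p μ) :
    ((restrictOp T A) ^ (m + 1)) (indicatorCLM μ p A f) = ((restrictOp T A) ^ (m + 1)) f := by
  rw [pow_succ, ContinuousLinearMap.mul_apply, ContinuousLinearMap.mul_apply,
    restrictOp_indicator_apply T hA]

lemma indicator_restrictOp_pow (T : Lp ℝ p μ →L[ℝ] Lp ℝ p μ) {A : Set Ω}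
    (hA : MeasurableSet A) (m : ℕ) (f : Lp ℝ p μ) :
    indicatorCLM μ p A (((restrictOp T A) ^ (m + 1)) f) = ((restrictOp T A) ^ (m + 1)) f := by
  rw [pow_succ', ContinuousLinearMap.mul_apply, restrictOp_apply', indicatorCLM_idem hA]

lemma restrictOp_pow_le {T : Lp ℝ p μ →L[ℝ] Lp ℝ p μ} (hT : IsPositiveOp T) {A : Set Ω}
    (hA : MeasurableSet A) (k : ℕ) {f : Lp ℝ p μ} (hf : 0 ≤ f) :
    0 ≤ ((restrictOp T A) ^ k) f ∧ ((restrictOp T A) ^ k) f ≤ (T ^ k) f := by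
  induction k with
  | zero =>
    rw [pow_zero, ContinuousLinearMap.one_apply]
    exact ⟨hf, le_rfl⟩
  | succ n ih =>
    obtain ⟨h0, hle⟩ := ih
    rw [pow_succ', ContinuousLinearMap.mul_apply, pow_succ', ContinuousLinearMap.mul_apply]
    refine ⟨restrictOp_pos hT hA _ h0, ?_⟩
    rw [restrictOp_apply']
    calc indicatorCLM μ p A (T (indicatorCLM μ p A (((restrictOp T A) ^ n) f)))
        ≤ T (indicatorCLM μ p A (((restrictOp T A) ^ n) f)) :=
          indicatorCLM_le_self hA (hT _ (indicatorCLM_nonneg hA h0))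
      _ ≤ T (((restrictOp T A) ^ n) f) := hT.mono (indicatorCLM_le_self hA h0)
      _ ≤ T ((T ^ n) f) := hT.mono hle

lemma le_norm_pow_of_le_specRadius {S : Lp ℝ p μ →L[ℝ] Lp ℝ p μ} {l : ℝ} (hl : 0 ≤ l)
    (h : l ≤ specRadius S) (k : ℕ) : l ^ (k + 1) ≤ ‖S ^ (k + 1)‖ := by
  have hb : BddBelow (Set.range fun n : ℕ => ‖S ^ (n + 1)‖ ^ (((n : ℝ) + 1)⁻¹)) := by
    refine ⟨0, ?_⟩
    rintro x ⟨n, rfl⟩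
    exact Real.rpow_nonneg (norm_nonneg _) _
  have h1 : l ≤ ‖S ^ (k + 1)‖ ^ (((k : ℝ) + 1)⁻¹) := h.trans (ciInf_le hb k)
  have hnn : (0 : ℝ) ≤ ‖S ^ (k + 1)‖ := norm_nonneg _
  calc l ^ (k + 1) ≤ (‖S ^ (k + 1)‖ ^ (((k : ℝ) + 1)⁻¹)) ^ (k + 1) := pow_le_pow_left₀ hl h1 _
    _ = ‖S ^ (k + 1)‖ := by
        rw [← Real.rpow_natCast (‖S ^ (k + 1)‖ ^ (((k : ℝ) + 1)⁻¹)) (k + 1),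
          ← Real.rpow_mul hnn]
        push_cast
        rw [inv_mul_cancel₀ (by positivity), Real.rpow_one]

lemma exists_le_one_norm_apply_gt {S : Lp ℝ p μ →L[ℝ] Lp ℝ p μ} {c : ℝ} (hc : 0 ≤ c)
    (h : c < ‖S‖) : ∃ f : Lp ℝ p μ, ‖f‖ ≤ 1 ∧ c < ‖S f‖ := by
  by_contra hcon
  push_neg at hcon
  refine absurd (ContinuousLinearMap.opNorm_le_bound S hc fun f => ?_) (not_le.mpr h)
  rcases eq_or_ne f 0 with rfl | hf
  · simp
  · have hnf : (0 : ℝ) < ‖f‖ := norm_pos_iff.mpr hf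
    have hg : ‖(‖f‖⁻¹ • f : Lp ℝ p μ)‖ ≤ 1 := by
      rw [norm_smul, norm_inv, norm_norm, inv_mul_cancel₀ hnf.ne']
    have h2 := hcon _ hg
    rw [_root_.map_smul, norm_smul, norm_inv, norm_norm] at h2
    calc ‖S f‖ = ‖f‖ * (‖f‖⁻¹ * ‖S f‖) := by field_simp
      _ ≤ ‖f‖ * c := mul_le_mul_of_nonneg_left h2 (norm_nonneg f)
      _ = c * ‖f‖ := mul_comm _ _

lemma admissible_measurableSet {T : Lp ℝ p μ →L[ℝ] Lp ℝ p μ} {A : Set Ω}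
    (hA : Admissible T A) : MeasurableSet A :=
  (MeasurableSpace.generateFrom_le (m := ‹MeasurableSpace Ω›)
    (fun _ hs => hs.1)) _ hA

lemma atom_inter_null {T : Lp ℝ p μ →L[ℝ] Lp ℝ p μ} {A B : Set Ω}
    (hA : Atom T A) (hB : Atom T B) (hne : ¬ A =ᵐ[μ] B) : μ (A ∩ B) = 0 := by
  have hAB : Admissible T (A ∩ B) := MeasurableSet.inter hA.1 hB.1
  have hle : (A ∩ B : Set Ω) ≤ᵐ[μ] A :=
    Filter.Eventually.of_forall fun x (hx : x ∈ A ∩ B) => hx.1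
  have hle' : (A ∩ B : Set Ω) ≤ᵐ[μ] B :=
    Filter.Eventually.of_forall fun x (hx : x ∈ A ∩ B) => hx.2
  rcases hA.2.2 _ hAB hle with h | h
  · exact h
  rcases hB.2.2 _ hAB hle' with h' | h'
  · exact h'
  exact absurd (h.symm.trans h') hne

lemma indicatorCLM_pos {A : Set Ω} (hA : MeasurableSet A) :
    IsPositiveOp (indicatorCLM μ p A) := fun _ hf => indicatorCLM_nonneg hA hf

lemma tendsto_indicator_norm (hp0 : p ≠ 0) (hp' : p ≠ ∞) (h : Lp ℝ p μ)
    {A : ℕ → Set Ω} (hm : ∀ i, MeasurableSet (A i))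
    (hd : ∀ i j, i ≠ j → μ (A i ∩ A j) = 0) :
    Tendsto (fun i => ‖indicatorCLM μ p (A i) h‖) atTop (𝓝 0) := by
  classical
  have hp_pos : 0 < p.toReal := ENNReal.toReal_pos hp0 hp'
  set B : ℕ → Set Ω := fun i => A i \ ⋃ j ∈ Set.Iio i, A j with hBdef
  have hmB : ∀ i, MeasurableSet (B i) :=
    fun i => (hm i).diff (MeasurableSet.biUnion (Set.to_countable _) fun j _ => hm j)
  have hae : ∀ i, (A i : Set Ω) =ᵐ[μ] B i := by
    intro i
    rw [MeasureTheory.ae_eq_set]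
    constructor
    · refine measure_mono_null (fun x hx => ?_) ((measure_biUnion_null_iff
        (Set.to_countable (Set.Iio i))).mpr fun j hj => hd i j (Set.mem_Iio.mp hj).ne')
      rcases hx with ⟨hxA, hxB⟩
      have hxU : x ∈ ⋃ j ∈ Set.Iio i, A j := by
        by_contra hxU
        exact hxB ⟨hxA, hxU⟩
      obtain ⟨j, hj, hxj⟩ := Set.mem_iUnion₂.mp hxU
      exact Set.mem_iUnion₂.mpr ⟨j, hj, hxA, hxj⟩
    · refine measure_mono_null (fun x hx => (hx.2 hx.1.1).elim) measure_empty
  have hdisjB : Pairwise (Function.onFun Disjoint B) := by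
    intro i j hij
    rcases hij.lt_or_gt with hlt | hlt
    · refine Set.disjoint_left.mpr fun x hxi hxj => ?_
      exact hxj.2 (Set.mem_biUnion (Set.mem_Iio.mpr hlt) hxi.1)
    · refine Set.disjoint_right.mpr fun x hxj hxi => ?_
      exact hxi.2 (Set.mem_biUnion (Set.mem_Iio.mpr hlt) hxj.1)
  have hne := Lp.eLpNorm_ne_top h
  rw [eLpNorm_eq_lintegral_rpow_enorm_toReal hp0 hp'] at hne
  simp only [enorm_eq_nnnorm] at hne
  have hFint : ∫⁻ x, (‖h x‖₊ : ℝ≥0∞) ^ p.toReal ∂μ ≠ ∞ := by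
    intro hcon
    rw [hcon, ENNReal.top_rpow_of_pos (one_div_pos.mpr hp_pos)] at hne
    exact hne rfl
  have htsum : ∑' i, ∫⁻ x in B i, (‖h x‖₊ : ℝ≥0∞) ^ p.toReal ∂μ ≠ ∞ := by
    rw [← lintegral_iUnion hmB hdisjB]
    exact ne_top_of_le_ne_top hFint (lintegral_mono' Measure.restrict_le_self le_rfl)
  have hzero := ENNReal.tendsto_atTop_zero_of_tsum_ne_top htsum
  have hnorm : ∀ i, ‖indicatorCLM μ p (A i) h‖
      = ((∫⁻ x in B i, (‖h x‖₊ : ℝ≥0∞) ^ p.toReal ∂μ) ^ (1 / p.toReal)).toReal := by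
    intro i
    rw [Lp.norm_def, eLpNorm_congr_ae (indicatorCLM_coeFn (hm i) h),
      eLpNorm_congr_ae (indicator_ae_eq_of_ae_eq_set (hae i)),
      eLpNorm_indicator_eq_eLpNorm_restrict (hmB i),
      eLpNorm_eq_lintegral_rpow_enorm_toReal hp0 hp']
    rfl
  have h1 : Tendsto (fun i => (∫⁻ x in B i, (‖h x‖₊ : ℝ≥0∞) ^ p.toReal ∂μ) ^ (1 / p.toReal))
      atTop (𝓝 0) := by
    have hcont := (ENNReal.continuous_rpow_const (y := 1 / p.toReal)).tendsto (0 : ℝ≥0∞)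
    rw [ENNReal.zero_rpow_of_pos (one_div_pos.mpr hp_pos)] at hcont
    exact hcont.comp hzero
  have h2 := (ENNReal.tendsto_toReal ENNReal.zero_ne_top).comp h1
  simp only [ENNReal.toReal_zero] at h2
  exact Tendsto.congr (fun i => (hnorm i).symm) h2

end AuxProof

variable {Ω : Type*} [MeasurableSpace Ω] {μ : MeasureTheory.Measure Ω} {p : ℝ≥0∞}

theorem statement19 [SigmaFinite μ] (hμ : μ Set.univ ≠ 0) [Fact (1 ≤ p)]
    (hp : 1 < p) (hp' : p ≠ ∞)
    (T : Lp ℝ p μ →L[ℝ] Lp ℝ p μ) (hT : IsPositiveOp T) (hpc : PowerCompact T)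
    (l : ℝ) (hl : 0 < l) (R : Set (Set Ω))
    (hR : ∀ A ∈ R, Atom T A ∧ l ≤ rhoSet T A)
    (hdist : ∀ A ∈ R, ∀ B ∈ R, A ≠ B → ¬ (A =ᵐ[μ] B)) :
    R.Finite := by
  by_contra hinf
  have hRinf : R.Infinite := hinf
  obtain ⟨k, hk1, hkc⟩ := hpc
  obtain ⟨m, rfl⟩ : ∃ m, k = m + 1 := ⟨k - 1, (Nat.succ_pred_eq_of_pos hk1).symm⟩
  let e := hRinf.natEmbedding
  set A : ℕ → Set Ω := fun i => (e i : Set Ω) with hAdef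
  have hAR : ∀ i, A i ∈ R := fun i => (e i).2
  have hAatom : ∀ i, Atom T (A i) := fun i => (hR _ (hAR i)).1
  have hmeas : ∀ i, MeasurableSet (A i) := fun i => admissible_measurableSet (hAatom i).1
  have hAne : ∀ i j, i ≠ j → ¬ (A i =ᵐ[μ] A j) := fun i j hij =>
    hdist _ (hAR i) _ (hAR j) (fun hEq => hij (e.injective (Subtype.ext hEq)))
  have hdisj : ∀ i j, i ≠ j → μ (A i ∩ A j) = 0 := fun i j hij =>
    atom_inter_null (hAatom i) (hAatom j) (hAne i j hij)
  have hlk : ∀ i, l ^ (m + 1) ≤ ‖(restrictOp T (A i)) ^ (m + 1)‖ := fun i =>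
    le_norm_pow_of_le_specRadius hl.le (hR _ (hAR i)).2 m
  set c : ℝ := l ^ (m + 1) / 2 with hcdef
  have hc0 : 0 < c := by positivity
  have hclt : ∀ i, c < ‖(restrictOp T (A i)) ^ (m + 1)‖ := fun i =>
    lt_of_lt_of_le (by rw [hcdef]; nlinarith [pow_pos hl (m + 1)]) (hlk i)
  have hchoice : ∀ i, ∃ f : Lp ℝ p μ, ‖f‖ ≤ 1 ∧
      c < ‖((restrictOp T (A i)) ^ (m + 1)) f‖ :=
    fun i => exists_le_one_norm_apply_gt hc0.le (hclt i)
  choose u hu1 hu2 using hchoice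
  set f : ℕ → Lp ℝ p μ := fun i => |indicatorCLM μ p (A i) (u i)| with hfdef
  have hf0 : ∀ i, 0 ≤ f i := fun i => abs_nonneg _
  have hfn : ∀ i, ‖f i‖ ≤ 1 := fun i => by
    rw [hfdef]
    calc ‖|indicatorCLM μ p (A i) (u i)|‖ = ‖indicatorCLM μ p (A i) (u i)‖ :=
          norm_abs_eq_norm _
      _ ≤ ‖u i‖ := indicatorCLM_norm_le (hmeas i) _
      _ ≤ 1 := hu1 i
  set g : ℕ → Lp ℝ p μ := fun i => ((restrictOp T (A i)) ^ (m + 1)) (f i) with hgdef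
  have hg0 : ∀ i, 0 ≤ g i := fun i => (restrictOp_pow_le hT (hmeas i) (m + 1) (hf0 i)).1
  have hgc : ∀ i, c < ‖g i‖ := by
    intro i
    have e1 : ((restrictOp T (A i)) ^ (m + 1)) (u i)
        = ((restrictOp T (A i)) ^ (m + 1)) (indicatorCLM μ p (A i) (u i)) :=
      (restrictOp_pow_indicator_apply T (hmeas i) m (u i)).symm
    have habs : |((restrictOp T (A i)) ^ (m + 1)) (indicatorCLM μ p (A i) (u i))| ≤ g i :=
      ((restrictOp_pos hT (hmeas i)).pow (m + 1)).abs_apply_le _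
    refine lt_of_lt_of_le (hu2 i) ?_
    rw [e1]
    exact norm_le_norm_of_abs_le_abs (le_of_le_of_eq habs (abs_of_nonneg (hg0 i)).symm)
  have hgle : ∀ i, g i ≤ (T ^ (m + 1)) (f i) :=
    fun i => (restrictOp_pow_le hT (hmeas i) (m + 1) (hf0 i)).2
  have hgind : ∀ i, indicatorCLM μ p (A i) (g i) = g i :=
    fun i => indicator_restrictOp_pow T (hmeas i) m (f i)
  -- compactness
  have hkc' : IsCompactOperator
      ⇑((T ^ (m + 1) : Lp ℝ p μ →L[ℝ] Lp ℝ p μ).toLinearMap) := hkc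
  obtain ⟨K, hK, hKsub⟩ := hkc'.image_closedBall_subset_compact 1
  set y : ℕ → Lp ℝ p μ := fun i => (T ^ (m + 1)) (f i) with hydef
  have hyK : ∀ i, y i ∈ K := fun i =>
    hKsub ⟨f i, mem_closedBall_zero_iff.mpr (hfn i), rfl⟩
  haveI : FirstCountableTopology (Lp ℝ p μ) :=
    inferInstanceAs (FirstCountableTopology (Lp ℝ p μ))
  obtain ⟨h, _, φ, hφ, hconv⟩ := hK.tendsto_subseq hyK
  -- the estimate
  have hest : ∀ i, c < ‖y i - h‖ + ‖indicatorCLM μ p (A i) h‖ := by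
    intro i
    have step : g i ≤ indicatorCLM μ p (A i) (y i - h) + indicatorCLM μ p (A i) h := by
      calc g i = indicatorCLM μ p (A i) (g i) := (hgind i).symm
        _ ≤ indicatorCLM μ p (A i) (y i) := (indicatorCLM_pos (hmeas i)).mono (hgle i)
        _ = indicatorCLM μ p (A i) (y i - h) + indicatorCLM μ p (A i) h := by
            rw [← map_add, sub_add_cancel]
    calc c < ‖g i‖ := hgc i
      _ ≤ ‖indicatorCLM μ p (A i) (y i - h) + indicatorCLM μ p (A i) h‖ :=
          norm_le_of_nonneg_of_le (hg0 i) step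
      _ ≤ ‖indicatorCLM μ p (A i) (y i - h)‖ + ‖indicatorCLM μ p (A i) h‖ := norm_add_le _ _
      _ ≤ ‖y i - h‖ + ‖indicatorCLM μ p (A i) h‖ := by
          have := indicatorCLM_norm_le (hmeas i) (y i - h)
          linarith
  -- convergence to zero
  have hp0 : p ≠ 0 := fun hp0 => by
    rw [hp0] at hp
    exact absurd hp (by simp)
  have hv := tendsto_indicator_norm hp0 hp' h hmeas hdisj
  have hy0 : Tendsto (fun j => ‖y (φ j) - h‖) atTop (nhds 0) := by
    have := hconv
    rw [tendsto_iff_norm_sub_tendsto_zero] at this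
    exact this
  have hsum : Tendsto (fun j => ‖y (φ j) - h‖ + ‖indicatorCLM μ p (A (φ j)) h‖)
      atTop (nhds 0) := by
    have := hy0.add (hv.comp hφ.tendsto_atTop)
    simpa using this
  have hev : ∀ᶠ j in atTop, ‖y (φ j) - h‖ + ‖indicatorCLM μ p (A (φ j)) h‖ < c :=
    hsum.eventually_lt_const hc0
  obtain ⟨j, hj⟩ := hev.exists
  exact absurd (hest (φ j)) (not_lt.mpr hj.le)

end PaperAtoms
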